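/- The algebraic equation 0 = Φ(1/ε) − Φ(h_∞/ε) − (1/ε)Φ'(h_∞/ε)(1 − h_∞), with Φ(v) = −1/(2v²) + 1/(8v⁸), admits a solution with asymptotic expansion h_∞ = ε + ε²/16 + (45/512)ε³ + O(ε⁴) as ε → 0⁺; in particular, substituting h_∞ = ε(1 + a ε + b ε²) and expanding in powers of ε forces a = 1/16 and b = 45/512. -/
import Mathlib


open Filter

/-- F(h∞, ε) = Φ(1/ε) − Φ(h∞/ε) − (1/ε)Φ'(h∞/ε)(1−h∞) for
Φ(v) = −1/(2v²) + 1/(8v⁸), Φ'(v) = 1/v³ − 1/v⁹. -/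
noncomputable def Fexp (hinf ε : ℝ) : ℝ :=
  (-1 / (2 * (1 / ε) ^ 2) + 1 / (8 * (1 / ε) ^ 8)) -
  (-1 / (2 * (hinf / ε) ^ 2) + 1 / (8 * (hinf / ε) ^ 8)) -
  (1 / ε) * (1 / (hinf / ε) ^ 3 - 1 / (hinf / ε) ^ 9) * (1 - hinf)

/-- u(ε) = 1 + aε + bε². -/
noncomputable def Uexp (a b ε : ℝ) : ℝ := 1 + a * ε + b * ε ^ 2

/-- Rational form of F: continuous at 0, value (3 − 48a)/8. -/
noncomputable def Gexp (a b ε : ℝ) : ℝ :=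
  ((-4 * ε ^ 2 + ε ^ 8) * Uexp a b ε ^ 9 + 12 * Uexp a b ε ^ 7 - 9 * Uexp a b ε -
      8 * (a + b * ε) *
        (Uexp a b ε ^ 5 + Uexp a b ε ^ 4 + Uexp a b ε ^ 3 + Uexp a b ε ^ 2 + Uexp a b ε + 1)) /
    (8 * Uexp a b ε ^ 9)

/-- Rational form of (F − (3−48a)/(8u⁹))/ε: continuous at 0,
value (75a − 120a² − 48b)/8. -/
noncomputable def G1exp (a b ε : ℝ) : ℝ :=
  ((-4 * ε + ε ^ 7) * Uexp a b ε ^ 9 +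
      12 * (a + b * ε) *
        (Uexp a b ε ^ 6 + Uexp a b ε ^ 5 + Uexp a b ε ^ 4 + Uexp a b ε ^ 3 + Uexp a b ε ^ 2 +
          Uexp a b ε + 1) -
      9 * (a + b * ε) -
      8 * (a + b * ε) ^ 2 *
        (5 + 4 * Uexp a b ε + 3 * Uexp a b ε ^ 2 + 2 * Uexp a b ε ^ 3 + Uexp a b ε ^ 4) -
      48 * b) /
    (8 * Uexp a b ε ^ 9)

lemma L1 (ε u : ℝ) (hε : ε ≠ 0) (hu : u ≠ 0) :
    Fexp (ε * u) ε =
      ((-4 * ε ^ 3 + ε ^ 9) * u ^ 9 + 12 * ε * u ^ 7 - 9 * ε * u - 8 * (u ^ 6 - 1)) /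
        (8 * ε * u ^ 9) := by
  unfold Fexp
  field_simp
  ring

lemma L2 (ε u t : ℝ) (h : u = 1 + ε * t) :
    (-4 * ε ^ 3 + ε ^ 9) * u ^ 9 + 12 * ε * u ^ 7 - 9 * ε * u - 8 * (u ^ 6 - 1) =
      ε * ((-4 * ε ^ 2 + ε ^ 8) * u ^ 9 + 12 * u ^ 7 - 9 * u -
        8 * t * (u ^ 5 + u ^ 4 + u ^ 3 + u ^ 2 + u + 1)) := by
  linear_combination (-8 * (u ^ 5 + u ^ 4 + u ^ 3 + u ^ 2 + u + 1)) * h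

lemma L3 (ε u t a b : ℝ) (h1 : u = 1 + ε * t) (h2 : t = a + b * ε) :
    (-4 * ε ^ 2 + ε ^ 8) * u ^ 9 + 12 * u ^ 7 - 9 * u -
        8 * t * (u ^ 5 + u ^ 4 + u ^ 3 + u ^ 2 + u + 1) =
      (3 - 48 * a) + ε * ((-4 * ε + ε ^ 7) * u ^ 9 +
        12 * t * (u ^ 6 + u ^ 5 + u ^ 4 + u ^ 3 + u ^ 2 + u + 1) - 9 * t -
        8 * t ^ 2 * (5 + 4 * u + 3 * u ^ 2 + 2 * u ^ 3 + u ^ 4) - 48 * b) := by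
  linear_combination
    (12 * (u ^ 6 + u ^ 5 + u ^ 4 + u ^ 3 + u ^ 2 + u + 1) - 9 -
      8 * t * (5 + 4 * u + 3 * u ^ 2 + 2 * u ^ 3 + u ^ 4)) * h1 - 48 * h2

lemma hU (a b ε : ℝ) : Uexp a b ε = 1 + ε * (a + b * ε) := by unfold Uexp; ring

lemma Fexp_eq_Gexp (a b ε : ℝ) (hε : ε ≠ 0) (hu : Uexp a b ε ≠ 0) :
    Fexp (ε * Uexp a b ε) ε = Gexp a b ε := by
  rw [L1 ε (Uexp a b ε) hε hu,
    show (8 : ℝ) * ε * Uexp a b ε ^ 9 = ε * (8 * Uexp a b ε ^ 9) by ring,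
    L2 ε (Uexp a b ε) (a + b * ε) (hU a b ε), mul_div_mul_left _ _ hε]
  rfl

lemma Gexp_eq (a b ε : ℝ) :
    Gexp a b ε = (3 - 48 * a) / (8 * Uexp a b ε ^ 9) + ε * G1exp a b ε := by
  unfold Gexp G1exp
  rw [L3 ε (Uexp a b ε) (a + b * ε) a b (hU a b ε) rfl, add_div, mul_div_assoc]

@[fun_prop]
lemma hUcont (a b : ℝ) : Continuous (Uexp a b) := by
  unfold Uexp; fun_prop

lemma tendsto_Gexp (a b : ℝ) :
    Tendsto (Gexp a b) (nhdsWithin 0 (Set.Ioi 0)) (nhds ((3 - 48 * a) / 8)) := by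
  have hc : ContinuousAt (Gexp a b) 0 := by
    unfold Gexp
    apply ContinuousAt.div
    · fun_prop
    · fun_prop
    · simp [Uexp]
  have h0 : Gexp a b 0 = (3 - 48 * a) / 8 := by
    simp [Gexp, Uexp]; ring
  have := hc.tendsto
  rw [h0] at this
  exact this.mono_left nhdsWithin_le_nhds

lemma tendsto_G1exp (a b : ℝ) :
    Tendsto (G1exp a b) (nhdsWithin 0 (Set.Ioi 0))
      (nhds ((75 * a - 120 * a ^ 2 - 48 * b) / 8)) := by
  have hc : ContinuousAt (G1exp a b) 0 := by
    unfold G1exp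
    apply ContinuousAt.div
    · fun_prop
    · fun_prop
    · simp [Uexp]
  have h0 : G1exp a b 0 = (75 * a - 120 * a ^ 2 - 48 * b) / 8 := by
    simp [G1exp, Uexp]; ring
  have := hc.tendsto
  rw [h0] at this
  exact this.mono_left nhdsWithin_le_nhds

lemma eventually_u_pos (a b : ℝ) :
    ∀ᶠ ε in nhdsWithin (0:ℝ) (Set.Ioi 0), ε ≠ 0 ∧ Uexp a b ε ≠ 0 := by
  have h1 : ∀ᶠ ε in nhdsWithin (0:ℝ) (Set.Ioi 0), Uexp a b ε ≠ 0 := by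
    have : ∀ᶠ ε in nhds (0:ℝ), Uexp a b ε ≠ 0 := by
      have hc : ContinuousAt (Uexp a b) 0 := (hUcont a b).continuousAt
      exact hc.eventually_ne (by simp [Uexp])
    exact this.filter_mono nhdsWithin_le_nhds
  have h2 : ∀ᶠ ε in nhdsWithin (0:ℝ) (Set.Ioi 0), ε ≠ 0 := by
    filter_upwards [self_mem_nhdsWithin] with ε hε
    exact ne_of_gt hε
  filter_upwards [h1, h2] with ε hu hε using ⟨hε, hu⟩

lemma F_eventually_eq_G (a b : ℝ) :
    (fun ε : ℝ => Fexp (ε * (1 + a * ε + b * ε ^ 2)) ε)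
      =ᶠ[nhdsWithin (0:ℝ) (Set.Ioi 0)] Gexp a b := by
  filter_upwards [eventually_u_pos a b] with ε ⟨hε, hu⟩
  have h : (1 + a * ε + b * ε ^ 2) = Uexp a b ε := rfl
  rw [h, Fexp_eq_Gexp a b ε hε hu]

/-- substituting h∞ = ε(1 + aε + bε²) into
0 = Φ(1/ε) − Φ(h∞/ε) − (1/ε)Φ'(h∞/ε)(1−h∞) and requiring the two lowest
orders in ε to vanish (i.e. F → 0 and F/ε → 0 as ε → 0⁺) forces
a = 1/16 and b = 45/512. -/
theorem stmt_9 (a b : ℝ) :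
    (Tendsto (fun ε : ℝ => Fexp (ε * (1 + a * ε + b * ε ^ 2)) ε)
        (nhdsWithin 0 (Set.Ioi 0)) (nhds 0) ∧
      Tendsto (fun ε : ℝ => Fexp (ε * (1 + a * ε + b * ε ^ 2)) ε / ε)
        (nhdsWithin 0 (Set.Ioi 0)) (nhds 0)) ↔
    (a = 1 / 16 ∧ b = 45 / 512) := by
  constructor
  · rintro ⟨h1, h2⟩
    have hG : Tendsto (fun ε : ℝ => Fexp (ε * (1 + a * ε + b * ε ^ 2)) ε)
        (nhdsWithin 0 (Set.Ioi 0)) (nhds ((3 - 48 * a) / 8)) :=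
      (tendsto_Gexp a b).congr' (F_eventually_eq_G a b).symm
    have ha0 : (3 - 48 * a) / 8 = 0 := tendsto_nhds_unique hG h1
    have ha : a = 1 / 16 := by
      have : (3 : ℝ) - 48 * a = 0 := by linarith [(div_eq_zero_iff.mp ha0).resolve_right (by norm_num)]
      linarith
    have heq : (fun ε : ℝ => Fexp (ε * (1 + a * ε + b * ε ^ 2)) ε / ε)
        =ᶠ[nhdsWithin (0:ℝ) (Set.Ioi 0)] G1exp a b := by
      filter_upwards [eventually_u_pos a b] with ε ⟨hε, hu⟩
      have h : (1 + a * ε + b * ε ^ 2) = Uexp a b ε := rfl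
      rw [h, Fexp_eq_Gexp a b ε hε hu, Gexp_eq a b ε,
        show (3 : ℝ) - 48 * a = 0 by rw [ha]; norm_num]
      rw [zero_div, zero_add]
      exact mul_div_cancel_left₀ _ hε
    have hG1 : Tendsto (fun ε : ℝ => Fexp (ε * (1 + a * ε + b * ε ^ 2)) ε / ε)
        (nhdsWithin 0 (Set.Ioi 0)) (nhds ((75 * a - 120 * a ^ 2 - 48 * b) / 8)) :=
      (tendsto_G1exp a b).congr' heq.symm
    have hb0 : (75 * a - 120 * a ^ 2 - 48 * b) / 8 = 0 := tendsto_nhds_unique hG1 h2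
    have hb : b = 45 / 512 := by
      have h : 75 * a - 120 * a ^ 2 - 48 * b = 0 := by linarith
      rw [ha] at h; nlinarith [h]
    exact ⟨ha, hb⟩
  · rintro ⟨ha, hb⟩
    subst ha hb
    constructor
    · have hG := tendsto_Gexp (1/16) (45/512)
      rw [show ((3 : ℝ) - 48 * (1/16)) / 8 = 0 by norm_num] at hG
      exact hG.congr' (F_eventually_eq_G (1/16) (45/512)).symm
    · have hG1 := tendsto_G1exp (1/16) (45/512)
      rw [show ((75 : ℝ) * (1/16) - 120 * (1/16) ^ 2 - 48 * (45/512)) / 8 = 0 by norm_num] at hG1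
      apply hG1.congr'
      symm
      filter_upwards [eventually_u_pos (1/16) (45/512)] with ε ⟨hε, hu⟩
      have h : (1 + (1/16 : ℝ) * ε + (45/512) * ε ^ 2) = Uexp (1/16) (45/512) ε := rfl
      rw [h, Fexp_eq_Gexp _ _ ε hε hu, Gexp_eq _ _ ε,
        show ((3 : ℝ) - 48 * (1/16)) = 0 by norm_num]
      rw [zero_div, zero_add]
      exact mul_div_cancel_left₀ _ hε
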